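/- Let x > 0 and 0 < y < π/2. Then A := x·sinh(x)·cos(y)·(sinh²x·cos²y − 3·cosh²x·sin²y) + y·cosh(x)·sin(y)·(3·sinh²x·cos²y − cosh²x·sin²y) − cosh(x)·cos(y)·(sinh²x + sin²y)·(sinh²x − sin²y) is strictly negative. -/

import Mathlib

open Real

/-- Auxiliary: `sinh x < x * cosh x` for `x > 0`. -/
lemma sinh_lt_mul_cosh {x : ℝ} (hx : 0 < x) : Real.sinh x < x * Real.cosh x := by
  have hd : ∀ t : ℝ, HasDerivAt (fun t => t * Real.cosh t - Real.sinh t)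
      (t * Real.sinh t) t := by
    intro t
    have h1 := (hasDerivAt_id t).mul (Real.hasDerivAt_cosh t)
    have h2 := h1.sub (Real.hasDerivAt_sinh t)
    refine h2.congr_deriv ?_
    simp [mul_comm]
  have hm : StrictMonoOn (fun t => t * Real.cosh t - Real.sinh t) (Set.Ici (0:ℝ)) := by
    apply strictMonoOn_of_deriv_pos (convex_Ici 0)
    · exact Continuous.continuousOn (by continuity)
    · intro t ht
      rw [interior_Ici] at ht
      rw [(hd t).deriv]
      exact mul_pos ht (by rwa [Real.sinh_pos_iff])
  have := hm Set.self_mem_Ici (Set.mem_Ici.2 hx.le) hx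
  simpa using this

/-- The quantity `A` of (6.27) is strictly negative for `x > 0`, `0 < y < π/2`. -/
theorem A_neg (x y : ℝ) (hx : 0 < x) (hy₀ : 0 < y) (hy₁ : y < π / 2) :
    x * Real.sinh x * Real.cos y
        * (Real.sinh x ^ 2 * Real.cos y ^ 2 - 3 * Real.cosh x ^ 2 * Real.sin y ^ 2)
      + y * Real.cosh x * Real.sin y
        * (3 * Real.sinh x ^ 2 * Real.cos y ^ 2 - Real.cosh x ^ 2 * Real.sin y ^ 2)
      - Real.cosh x * Real.cos y * (Real.sinh x ^ 2 + Real.sin y ^ 2)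
        * (Real.sinh x ^ 2 - Real.sin y ^ 2) < 0 := by
  set s := Real.sinh x with hs
  set c := Real.cosh x with hc
  set S := Real.sin y with hS
  set C := Real.cos y with hC
  have hs0 : 0 < s := by rwa [hs, Real.sinh_pos_iff]
  have hc1 : (1:ℝ) ≤ c := Real.one_le_cosh x
  have hc0 : (0:ℝ) < c := lt_of_lt_of_le one_pos hc1
  have hS0 : 0 < S := Real.sin_pos_of_pos_of_lt_pi hy₀ (by linarith [Real.pi_pos])
  have hC0 : 0 < C := Real.cos_pos_of_mem_Ioo ⟨by linarith [Real.pi_pos], hy₁⟩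
  have hid1 : c ^ 2 - 1 - s ^ 2 = 0 := by
    rw [hs, hc]; nlinarith [Real.cosh_sq x]
  have hid2 : C ^ 2 - 1 + S ^ 2 = 0 := by
    rw [hS, hC]; nlinarith [Real.sin_sq_add_cos_sq y]
  -- x < sinh x * cosh x  (from sinh 2x > 2x)
  have h1 : x < s * c := by
    have h := Real.self_lt_sinh_iff.2 (show (0:ℝ) < 2 * x by linarith)
    rw [Real.sinh_two_mul] at h
    rw [hs, hc]; linarith
  -- sin y * cos y < y  (from sin 2y < 2y)
  have h2 : S * C < y := by
    have h := Real.sin_lt (show (0:ℝ) < 2 * y by linarith)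
    rw [Real.sin_two_mul] at h
    rw [hS, hC]; linarith
  -- sinh x < x * cosh x
  have h3 : s < x * c := sinh_lt_mul_cosh hx
  -- y * cos y < sin y  (from y < tan y)
  have h4 : y * C < S := by
    have ht := Real.lt_tan hy₀ hy₁
    rw [Real.tan_eq_sin_div_cos] at ht
    rw [hS, hC]
    calc y * Real.cos y < Real.sin y / Real.cos y * Real.cos y :=
          mul_lt_mul_of_pos_right ht hC0
      _ = Real.sin y := div_mul_cancel₀ _ hC0.ne'
  -- the six positive pieces of the certificate
  have hg1 : 0 < (s * c - x) * (s * S ^ 2 * C) :=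
    mul_pos (sub_pos.2 h1) (by positivity)
  have hg2 : 0 < (s * c - x) * (s ^ 3 * C) :=
    mul_pos (sub_pos.2 h1) (by positivity)
  have hg3 : 0 < (y - S * C) * (c * S ^ 3) :=
    mul_pos (sub_pos.2 h2) (by positivity)
  have hg4 : 0 < (y - S * C) * (s ^ 2 * c * S) :=
    mul_pos (sub_pos.2 h2) (by positivity)
  have hg5 : 0 < (x * c - s) * (4 * (s * c * S ^ 2 * C)) :=
    mul_pos (sub_pos.2 h3) (by positivity)
  have hg6 : 0 < (S - y * C) * (4 * (s ^ 2 * c * S * C)) :=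
    mul_pos (sub_pos.2 h4) (by positivity)
  -- exact algebraic identity: A = -(g₁+⋯+g₆) + μ₁·(c²−1−s²) + μ₂·(C²−1+S²)
  have key : x * s * C * (s ^ 2 * C ^ 2 - 3 * c ^ 2 * S ^ 2)
      + y * c * S * (3 * s ^ 2 * C ^ 2 - c ^ 2 * S ^ 2)
      - c * C * (s ^ 2 + S ^ 2) * (s ^ 2 - S ^ 2)
      = -((s * c - x) * (s * S ^ 2 * C) + (s * c - x) * (s ^ 3 * C)
          + (y - S * C) * (c * S ^ 3) + (y - S * C) * (s ^ 2 * c * S)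
          + (x * c - s) * (4 * (s * c * S ^ 2 * C))
          + (S - y * C) * (4 * (s ^ 2 * c * S * C)))
        + (x * s * S ^ 2 * C - y * c * S ^ 3) * (c ^ 2 - 1 - s ^ 2)
        + (x * s ^ 3 * C - y * s ^ 2 * c * S) * (C ^ 2 - 1 + S ^ 2) := by
    ring
  rw [key, hid1, hid2]
  linarith
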